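/- With probability at least 1 − δ over the draw of the i.i.d. training sample Z^n, every classifier h in the countable class ℋ satisfies |R_FP(h) − R̂_FP(h)| ≤ φ_FP(h, δ); likewise, with probability at least 1 − δ, every h ∈ ℋ satisfies |R_FN(h) − R̂_FN(h)| ≤ φ_FN(h, δ). These hold for every n ≥ 1, every 0 < δ < 1, and every underlying distribution P. -/

import Mathlib

open MeasureTheory ENNReal

/-- Symmetric deviation between two extended nonnegative reals. -/
noncomputable def edistE (a b : ℝ≥0∞) : ℝ≥0∞ := (a - b) ⊔ (b - a)

/-- The false positive rate `R_FP(h) = P(h(X) = 1 | Y = 0)`. -/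
noncomputable def RFP {𝓧 : Type*} [MeasurableSpace 𝓧] (P : Measure (𝓧 × Bool))
    (h : 𝓧 → Bool) : ℝ≥0∞ :=
  P {z : 𝓧 × Bool | h z.1 = true ∧ z.2 = false} / P {z : 𝓧 × Bool | z.2 = false}

/-- The false negative rate `R_FN(h) = P(h(X) = 0 | Y = 1)`. -/
noncomputable def RFN {𝓧 : Type*} [MeasurableSpace 𝓧] (P : Measure (𝓧 × Bool))
    (h : 𝓧 → Bool) : ℝ≥0∞ :=
  P {z : 𝓧 × Bool | h z.1 = false ∧ z.2 = true} / P {z : 𝓧 × Bool | z.2 = true}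

/-- The number of negative training examples `n₀`. -/
def nneg {𝓧 : Type*} {n : ℕ} (ω : Fin n → 𝓧 × Bool) : ℕ :=
  (Finset.univ.filter fun i => (ω i).2 = false).card

/-- The number of positive training examples `n₁`. -/
def npos {𝓧 : Type*} {n : ℕ} (ω : Fin n → 𝓧 × Bool) : ℕ :=
  (Finset.univ.filter fun i => (ω i).2 = true).card

/-- The empirical false positive rate, equal to `0` when `n₀ = 0`. -/
noncomputable def RhatFP {𝓧 : Type*} {n : ℕ} (h : 𝓧 → Bool) (ω : Fin n → 𝓧 × Bool) : ℝ≥0∞ :=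
  if 0 < nneg ω then
    ((Finset.univ.filter fun i => (ω i).2 = false ∧ h (ω i).1 = true).card : ℝ≥0∞)
      / (nneg ω : ℝ≥0∞)
  else 0

/-- The empirical false negative rate, equal to `0` when `n₁ = 0`. -/
noncomputable def RhatFN {𝓧 : Type*} {n : ℕ} (h : 𝓧 → Bool) (ω : Fin n → 𝓧 × Bool) : ℝ≥0∞ :=
  if 0 < npos ω then
    ((Finset.univ.filter fun i => (ω i).2 = true ∧ h (ω i).1 = false).card : ℝ≥0∞)
      / (npos ω : ℝ≥0∞)
  else 0

/-- The penalty `√((⟦h⟧ log 2 + log(2/δ)) / (2 m))`, equal to `1` when `m = 0`. -/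
noncomputable def penNP (c δ : ℝ) (m : ℕ) : ℝ≥0∞ :=
  if 0 < m then ENNReal.ofReal (Real.sqrt ((c * Real.log 2 + Real.log (2 / δ)) / (2 * m)))
  else 1

section NPAux
open Real Finset MeasureTheory ENNReal

-- Hoeffding's lemma specialized to Bernoulli
-- step 1: derivative bookkeeping

noncomputable def Dfun (p : ℝ) (x : ℝ) : ℝ := p * exp (x * (1 - p)) + (1 - p) * exp (-(x * p))

lemma Dfun_pos {p : ℝ} (hp0 : 0 < p) (hp1 : p < 1) (x : ℝ) : 0 < Dfun p x := by
  have := exp_pos (x * (1 - p)); have := exp_pos (-(x * p))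
  unfold Dfun; nlinarith

lemma hasDerivAt_Dfun (p x : ℝ) :
    HasDerivAt (Dfun p) (p * (1 - p) * exp (x * (1 - p)) - (1 - p) * p * exp (-(x * p))) x := by
  have h1 : HasDerivAt (fun x => exp (x * (1 - p))) ((1 - p) * exp (x * (1 - p))) x := by
    have h := (hasDerivAt_id x).mul_const (1 - p)
    simp only [id] at h
    simpa [mul_comm, Function.comp_def] using (Real.hasDerivAt_exp (x * (1 - p))).comp x h
  have h2 : HasDerivAt (fun x => exp (-(x * p))) (-p * exp (-(x * p))) x := by
    have : HasDerivAt (fun x : ℝ => -(x * p)) (-p) x := by simpa [Pi.neg_def] using ((hasDerivAt_id x).mul_const p).neg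
    simpa [mul_comm, Function.comp_def] using (Real.hasDerivAt_exp (-(x * p))).comp x this
  have : HasDerivAt (Dfun p) _ x := ((h1.const_mul p).add (h2.const_mul (1 - p)))
  convert this using 1
  ring

example : True := trivial

noncomputable def Nfun (p x : ℝ) : ℝ :=
  p * (1 - p) * exp (x * (1 - p)) - (1 - p) * p * exp (-(x * p))

noncomputable def gfun (p x : ℝ) : ℝ := Nfun p x / Dfun p x

lemma hasDerivAt_Nfun (p x : ℝ) :
    HasDerivAt (Nfun p) (p * (1 - p) ^ 2 * exp (x * (1 - p)) + (1 - p) * p ^ 2 * exp (-(x * p))) x := by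
  have h1 : HasDerivAt (fun x => exp (x * (1 - p))) ((1 - p) * exp (x * (1 - p))) x := by
    have h := (hasDerivAt_id x).mul_const (1 - p)
    simp only [id] at h
    simpa [mul_comm, Function.comp_def] using (Real.hasDerivAt_exp (x * (1 - p))).comp x h
  have h2 : HasDerivAt (fun x => exp (-(x * p))) (-p * exp (-(x * p))) x := by
    have h : HasDerivAt (fun x : ℝ => -(x * p)) (-p) x := by
      simpa [Pi.neg_def] using ((hasDerivAt_id x).mul_const p).neg
    simpa [mul_comm, Function.comp_def] using (Real.hasDerivAt_exp (-(x * p))).comp x h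
  have : HasDerivAt (Nfun p) _ x := ((h1.const_mul (p * (1 - p))).sub (h2.const_mul ((1 - p) * p)))
  convert this using 1
  ring

lemma hasDerivAt_gfun {p : ℝ} (hp0 : 0 < p) (hp1 : p < 1) (x : ℝ) :
    HasDerivAt (gfun p)
      ((p * exp (x * (1 - p))) * ((1 - p) * exp (-(x * p))) / (Dfun p x) ^ 2) x := by
  have hD := Dfun_pos hp0 hp1 x
  have h : HasDerivAt (gfun p) _ x := (hasDerivAt_Nfun p x).div (hasDerivAt_Dfun p x) hD.ne'
  convert h using 1
  have : Dfun p x = p * exp (x * (1 - p)) + (1 - p) * exp (-(x * p)) := rfl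
  rw [this]
  unfold Nfun
  ring

lemma gfun_zero (p : ℝ) : gfun p 0 = 0 := by
  have : Nfun p 0 = 0 := by simp [Nfun]; ring
  simp [gfun, this]

lemma deriv_gfun_bounds {p : ℝ} (hp0 : 0 < p) (hp1 : p < 1) (x : ℝ) :
    0 ≤ deriv (gfun p) x ∧ deriv (gfun p) x ≤ 1 / 4 := by
  rw [(hasDerivAt_gfun hp0 hp1 x).deriv]
  have hD := Dfun_pos hp0 hp1 x
  have e1 : 0 < p * exp (x * (1 - p)) := by positivity
  have e2 : 0 < (1 - p) * exp (-(x * p)) := by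
    have := exp_pos (-(x * p)); nlinarith
  have hDe : Dfun p x = p * exp (x * (1 - p)) + (1 - p) * exp (-(x * p)) := rfl
  constructor
  · positivity
  · rw [div_le_iff₀ (by positivity), hDe]
    nlinarith [sq_nonneg (p * exp (x * (1 - p)) - (1 - p) * exp (-(x * p)))]

lemma gfun_le {p : ℝ} (hp0 : 0 < p) (hp1 : p < 1) {x : ℝ} (hx : 0 ≤ x) :
    gfun p x ≤ x / 4 := by
  have hmono : Monotone (fun x => x / 4 - gfun p x) := by
    apply monotone_of_deriv_nonneg
    · exact (differentiable_id.div_const 4).sub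
        (fun y => ((hasDerivAt_gfun hp0 hp1 y).differentiableAt))
    · intro y
      have hd : HasDerivAt (fun x : ℝ => x / 4 - gfun p x)
          (1 / 4 - (p * exp (y * (1 - p))) * ((1 - p) * exp (-(y * p))) / (Dfun p y) ^ 2) y := by
        simpa [Pi.sub_def] using ((hasDerivAt_id y).div_const 4).sub (hasDerivAt_gfun hp0 hp1 y)
      rw [hd.deriv]
      have := (deriv_gfun_bounds hp0 hp1 y).2
      rw [(hasDerivAt_gfun hp0 hp1 y).deriv] at this
      linarith
  have h0 := hmono hx
  simp [gfun_zero] at h0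
  linarith

lemma log_Dfun_le {p : ℝ} (hp0 : 0 < p) (hp1 : p < 1) {x : ℝ} (hx : 0 ≤ x) :
    log (Dfun p x) ≤ x ^ 2 / 8 := by
  have hdiffD : ∀ y, DifferentiableAt ℝ (Dfun p) y :=
    fun y => (hasDerivAt_Dfun p y).differentiableAt
  have hF : ∀ y, HasDerivAt (fun y => y ^ 2 / 8 - log (Dfun p y)) (y / 4 - gfun p y) y := by
    intro y
    have h1 : HasDerivAt (fun y : ℝ => y ^ 2 / 8) (y / 4) y := by
      have : HasDerivAt (fun y : ℝ => y ^ 2 / 8) _ y := (hasDerivAt_pow 2 y).div_const 8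
      convert this using 1; ring
    have h2 : HasDerivAt (fun y => log (Dfun p y)) (gfun p y) y := by
      have := (hasDerivAt_Dfun p y).log (Dfun_pos hp0 hp1 y).ne'
      exact this
    exact h1.sub h2
  have hmono : MonotoneOn (fun y => y ^ 2 / 8 - log (Dfun p y)) (Set.Ici 0) := by
    apply monotoneOn_of_deriv_nonneg (convex_Ici 0)
    · have hc : Continuous (Dfun p) := by unfold Dfun; fun_prop
      exact ((continuous_pow 2).div_const 8).continuousOn.sub
        (Continuous.continuousOn (hc.log (fun y => (Dfun_pos hp0 hp1 y).ne')))
    · intro y _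
      exact ((hF y).differentiableAt).differentiableWithinAt
    · intro y hy
      rw [interior_Ici] at hy
      rw [(hF y).deriv]
      have := gfun_le hp0 hp1 (le_of_lt hy)
      linarith
  have h0 := hmono (Set.self_mem_Ici) (Set.mem_Ici.mpr hx) hx
  have hD0 : Dfun p 0 = 1 := by simp [Dfun]
  simp [hD0] at h0
  linarith

lemma Dfun_symm (p x : ℝ) : Dfun (1 - p) (-x) = Dfun p x := by
  unfold Dfun; ring_nf

lemma bernoulli_mgf_bound {p : ℝ} (hp0 : 0 ≤ p) (hp1 : p ≤ 1) (x : ℝ) :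
    Dfun p x ≤ exp (x ^ 2 / 8) := by
  have key : ∀ q : ℝ, 0 < q → q < 1 → ∀ y : ℝ, 0 ≤ y → Dfun q y ≤ exp (y ^ 2 / 8) := by
    intro q hq0 hq1 y hy
    have := log_Dfun_le hq0 hq1 hy
    calc Dfun q y = exp (log (Dfun q y)) := (exp_log (Dfun_pos hq0 hq1 y)).symm
      _ ≤ exp (y ^ 2 / 8) := exp_le_exp.mpr this
  have hone : (1 : ℝ) ≤ exp (x ^ 2 / 8) := one_le_exp (by positivity)
  rcases eq_or_lt_of_le hp0 with h0 | h0
  · have : Dfun p x = 1 := by simp [Dfun, ← h0]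
    rw [this]; exact hone
  rcases eq_or_lt_of_le hp1 with h1 | h1
  · have : Dfun p x = 1 := by simp [Dfun, h1]
    rw [this]; exact hone
  rcases le_or_gt 0 x with hx | hx
  · exact key p h0 h1 x hx
  · have := key (1 - p) (by linarith) (by linarith) (-x) (by linarith)
    rw [Dfun_symm] at this
    simpa using this


def kb {n : ℕ} (b : Fin n → Bool) : ℕ := (univ.filter fun i => b i = false).card

def jb {n : ℕ} (b c : Fin n → Bool) : ℕ :=
  (univ.filter fun i => b i = false ∧ c i = true).card

lemma prod_split {n : ℕ} (b : Fin n → Bool) (A B : ℝ) :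
    ∏ i, (if b i = false then A else B)
      = A ^ kb b * B ^ (univ.filter fun i => ¬ b i = false).card := by
  rw [← Finset.prod_filter_mul_prod_filter_not univ (fun i => b i = false), kb]
  congr 1
  · rw [Finset.prod_congr rfl (fun i hi => if_pos (Finset.mem_filter.mp hi).2),
      Finset.prod_const]
  · rw [Finset.prod_congr rfl (fun i hi => if_neg (Finset.mem_filter.mp hi).2),
      Finset.prod_const]

lemma chernoff_sum {n : ℕ} (m : Bool × Bool → ℝ) (b : Fin n → Bool) (θ : ℝ) :
    ∑ c : Fin n → Bool, (∏ i, m (c i, b i)) * exp (θ * (jb b c : ℝ))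
      = ∏ i, (if b i = false
          then m (true, false) * exp θ + m (false, false)
          else m (true, true) + m (false, true)) := by
  have hj : ∀ c : Fin n → Bool, (jb b c : ℝ)
      = ∑ i, (if b i = false ∧ c i = true then (1 : ℝ) else 0) := by
    intro c
    rw [jb, Finset.card_filter]
    push_cast
    rfl
  have step : ∀ c : Fin n → Bool, (∏ i, m (c i, b i)) * exp (θ * (jb b c : ℝ))
      = ∏ i, (m (c i, b i) * exp (θ * (if b i = false ∧ c i = true then (1:ℝ) else 0))) := by
    intro c
    rw [Finset.prod_mul_distrib, hj, Finset.mul_sum, Real.exp_sum]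
  rw [Finset.sum_congr rfl (fun c _ => step c),
    ← Fintype.prod_sum (fun i (x : Bool) => m (x, b i) * rexp (θ * if b i = false ∧ x = true then 1 else 0))]
  apply Finset.prod_congr rfl
  intro i _
  rw [Fintype.sum_bool]
  cases hb : b i <;> simp [hb]

lemma perfac_up {p1 p0' t : ℝ} (hp1 : 0 ≤ p1) (hp0' : 0 ≤ p0') (ht : 0 ≤ t) :
    exp (-(4*t * (p1/(p1+p0') + t))) * (p1 * exp (4*t) + p0')
      ≤ (p1 + p0') * exp (-(2*t^2)) := by
  rcases eq_or_lt_of_le (by linarith : (0:ℝ) ≤ p1 + p0') with h0 | h0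
  · have h1 : p1 = 0 := by linarith
    have h2 : p0' = 0 := by linarith
    simp [h1, h2]
  · set L : ℝ := 4*t with hL
    set pp : ℝ := p1/(p1+p0') with hpp
    have hpp0 : 0 ≤ pp := div_nonneg hp1 (le_of_lt h0)
    have hpp1 : pp ≤ 1 := by rw [hpp, div_le_one h0]; linarith
    have hp1e : p1 = pp * (p1 + p0') := by rw [hpp]; field_simp
    have hp0'e : p0' = (1 - pp) * (p1 + p0') := by
      have := hp1e; nlinarith [hp1e]
    have h1 : exp (L * pp) * exp (L * (1 - pp)) = exp L := by
      rw [← exp_add]; congr 1; ring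
    have h2 : exp (L * pp) * exp (-(L * pp)) = 1 := by
      rw [← exp_add]; simp
    have key : p1 * exp L + p0' = (p1 + p0') * (exp (L * pp) * Dfun pp L) := by
      rw [Dfun]
      have expand : (p1 + p0') * (exp (L*pp) * (pp * exp (L*(1-pp)) + (1-pp) * exp (-(L*pp))))
          = (pp*(p1+p0')) * (exp (L*pp) * exp (L*(1-pp)))
            + ((1-pp)*(p1+p0')) * (exp (L*pp) * exp (-(L*pp))) := by ring
      rw [expand, h1, h2, ← hp1e, ← hp0'e]; ring
    have hD := bernoulli_mgf_bound hpp0 hpp1 L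
    calc exp (-(L * (pp + t))) * (p1 * exp L + p0')
        = (p1 + p0') * (exp (-(L * (pp + t))) * exp (L * pp)) * Dfun pp L := by
          rw [key]; ring
      _ ≤ (p1 + p0') * (exp (-(L * (pp + t))) * exp (L * pp)) * exp (L^2/8) := by
          apply mul_le_mul_of_nonneg_left hD
          positivity
      _ = (p1 + p0') * exp (-(L * (pp + t)) + L * pp + L^2/8) := by
          rw [← exp_add, mul_assoc, ← exp_add]
      _ = (p1 + p0') * exp (-(2*t^2)) := by
          congr 1
          rw [hL]; ring_nf

lemma perfac_down {p1 p0' t : ℝ} (hp1 : 0 ≤ p1) (hp0' : 0 ≤ p0') (ht : 0 ≤ t) :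
    exp (4*t * (p1/(p1+p0') - t)) * (p1 * exp (-(4*t)) + p0')
      ≤ (p1 + p0') * exp (-(2*t^2)) := by
  rcases eq_or_lt_of_le (by linarith : (0:ℝ) ≤ p1 + p0') with h0 | h0
  · have h1 : p1 = 0 := by linarith
    have h2 : p0' = 0 := by linarith
    simp [h1, h2]
  · set L : ℝ := 4*t with hL
    set pp : ℝ := p1/(p1+p0') with hpp
    have hpp0 : 0 ≤ pp := div_nonneg hp1 (le_of_lt h0)
    have hpp1 : pp ≤ 1 := by rw [hpp, div_le_one h0]; linarith
    have hp1e : p1 = pp * (p1 + p0') := by rw [hpp]; field_simp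
    have hp0'e : p0' = (1 - pp) * (p1 + p0') := by nlinarith [hp1e]
    have h1 : exp (-(L * pp)) * exp (-L * (1 - pp)) = exp (-L) := by
      rw [← exp_add]; congr 1; ring
    have h2 : exp (-(L * pp)) * exp (-(-L * pp)) = 1 := by
      rw [← exp_add]; simp
    have key : p1 * exp (-L) + p0' = (p1 + p0') * (exp (-(L * pp)) * Dfun pp (-L)) := by
      rw [Dfun]
      have expand : (p1 + p0') * (exp (-(L*pp)) * (pp * exp (-L*(1-pp)) + (1-pp) * exp (-(-L*pp))))
          = (pp*(p1+p0')) * (exp (-(L*pp)) * exp (-L*(1-pp)))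
            + ((1-pp)*(p1+p0')) * (exp (-(L*pp)) * exp (-(-L*pp))) := by ring
      rw [expand, h1, h2, ← hp1e, ← hp0'e]; ring
    have hD := bernoulli_mgf_bound hpp0 hpp1 (-L)
    calc exp (L * (pp - t)) * (p1 * exp (-L) + p0')
        = (p1 + p0') * (exp (L * (pp - t)) * exp (-(L * pp))) * Dfun pp (-L) := by
          rw [key]; ring
      _ ≤ (p1 + p0') * (exp (L * (pp - t)) * exp (-(L * pp))) * exp ((-L)^2/8) := by
          apply mul_le_mul_of_nonneg_left hD
          positivity
      _ = (p1 + p0') * exp (L * (pp - t) + -(L * pp) + (-L)^2/8) := by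
          rw [← exp_add, mul_assoc, ← exp_add]
      _ = (p1 + p0') * exp (-(2*t^2)) := by
          congr 1
          rw [hL]; ring_nf

set_option maxHeartbeats 1000000 in
lemma inner_bound {n : ℕ} (m : Bool × Bool → ℝ) (hm : ∀ x, 0 ≤ m x) (b : Fin n → Bool)
    (c' : ℝ) (hc' : 0 ≤ c') :
    ∑ c : Fin n → Bool,
      (if 0 < kb b ∧ Real.sqrt (c' / (2 * kb b)) <
          |m (true, false) / (m (true, false) + m (false, false)) - (jb b c : ℝ) / (kb b)|
        then ∏ i, m (c i, b i) else 0)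
      ≤ (∏ i, (if b i = false then m (true, false) + m (false, false)
                else m (true, true) + m (false, true))) * (2 * exp (-c')) := by
  set p1 : ℝ := m (true, false) with hp1def
  set p0' : ℝ := m (false, false) with hp0'def
  set labT : ℝ := m (true, true) + m (false, true) with hlabTdef
  have hp1 : 0 ≤ p1 := hm _
  have hp0' : 0 ≤ p0' := hm _
  have hlabT : 0 ≤ labT := add_nonneg (hm _) (hm _)
  have hRHSfac : 0 ≤ ∏ i, (if b i = false then p1 + p0' else labT) :=
    Finset.prod_nonneg fun i _ => by split <;> [linarith; exact hlabT]
  rcases Nat.eq_zero_or_pos (kb b) with hk0 | hk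
  · simp only [hk0, lt_irrefl, false_and, if_false]
    simp only [Finset.sum_const, smul_zero]
    positivity
  · set k : ℕ := kb b with hkdef
    set t : ℝ := Real.sqrt (c' / (2 * k)) with htdef
    have hkR : (0:ℝ) < k := by exact_mod_cast hk
    have ht : 0 ≤ t := Real.sqrt_nonneg _
    have ht2 : t ^ 2 = c' / (2 * k) := Real.sq_sqrt (by positivity)
    have hc'eq : exp (-c') = exp (-(2 * t ^ 2)) ^ k := by
      rw [← Real.exp_nat_mul]
      congr 1
      rw [ht2]
      field_simp
    set pp : ℝ := p1 / (p1 + p0') with hppdef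
    set W : (Fin n → Bool) → ℝ := fun c => ∏ i, m (c i, b i) with hWdef
    have hW : ∀ c, 0 ≤ W c := fun c => Finset.prod_nonneg fun i _ => hm _
    set L : ℝ := 4 * t with hLdef
    have hL : 0 ≤ L := by positivity
    set NK : ℕ := (univ.filter fun i => ¬ b i = false).card with hNKdef
    -- pointwise splitting of the bad event
    have split : ∀ c : Fin n → Bool,
        (if 0 < k ∧ t < |pp - (jb b c : ℝ) / k| then W c else 0)
        ≤ (if (k:ℝ) * (pp + t) < (jb b c : ℝ) then W c else 0)
          + (if (jb b c : ℝ) < (k:ℝ) * (pp - t) then W c else 0) := by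
      intro c
      have w0 := hW c
      have nn1 : 0 ≤ (if (k:ℝ) * (pp + t) < (jb b c : ℝ) then W c else 0) := by positivity
      have nn2 : 0 ≤ (if (jb b c : ℝ) < (k:ℝ) * (pp - t) then W c else 0) := by positivity
      by_cases hBad : 0 < k ∧ t < |pp - (jb b c : ℝ) / k|
      · rw [if_pos hBad]
        obtain ⟨-, habs⟩ := hBad
        rcases lt_abs.mp habs with hA | hA
        · have hj : (jb b c : ℝ) < (k:ℝ) * (pp - t) := by
            have h1 : (jb b c : ℝ) / k < pp - t := by linarith
            have h2 := (div_lt_iff₀ hkR).mp h1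
            linarith
          rw [if_pos hj]
          linarith
        · have hj : (k:ℝ) * (pp + t) < (jb b c : ℝ) := by
            have h1 : pp + t < (jb b c : ℝ) / k := by linarith
            have h2 := (lt_div_iff₀ hkR).mp h1
            linarith
          rw [if_pos hj]
          linarith
      · rw [if_neg hBad]
        linarith
    have hsum_le := Finset.sum_le_sum (fun c (_ : c ∈ Finset.univ) => split c)
    rw [Finset.sum_add_distrib] at hsum_le
    refine le_trans hsum_le ?_
    -- pointwise Chernoff bounds
    have ptup : ∀ c : Fin n → Bool,
        (if (k:ℝ) * (pp + t) < (jb b c : ℝ) then W c else 0)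
          ≤ (W c * exp (L * (jb b c : ℝ))) * exp (-(L * ((k:ℝ) * (pp + t)))) := by
      intro c
      have w0 := hW c
      rw [mul_assoc, ← exp_add]
      split_ifs with h
      · have h1 : (1:ℝ) ≤ exp (L * (jb b c : ℝ) + -(L * ((k:ℝ) * (pp + t)))) := by
          apply Real.one_le_exp
          nlinarith
        nlinarith
      · positivity
    have ptdown : ∀ c : Fin n → Bool,
        (if (jb b c : ℝ) < (k:ℝ) * (pp - t) then W c else 0)
          ≤ (W c * exp (-L * (jb b c : ℝ))) * exp (L * ((k:ℝ) * (pp - t))) := by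
      intro c
      have w0 := hW c
      rw [mul_assoc, ← exp_add]
      split_ifs with h
      · have h1 : (1:ℝ) ≤ exp (-L * (jb b c : ℝ) + L * ((k:ℝ) * (pp - t))) := by
          apply Real.one_le_exp
          nlinarith
        nlinarith
      · positivity
    have up_le : ∑ c : Fin n → Bool, (if (k:ℝ) * (pp + t) < (jb b c : ℝ) then W c else 0)
        ≤ ((p1 * exp L + p0') ^ k * labT ^ NK) * exp (-(L * ((k:ℝ) * (pp + t)))) := by
      refine le_trans (Finset.sum_le_sum fun c _ => ptup c) ?_
      rw [← Finset.sum_mul, chernoff_sum m b L, prod_split]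
    have down_le : ∑ c : Fin n → Bool, (if (jb b c : ℝ) < (k:ℝ) * (pp - t) then W c else 0)
        ≤ ((p1 * exp (-L) + p0') ^ k * labT ^ NK) * exp (L * ((k:ℝ) * (pp - t))) := by
      refine le_trans (Finset.sum_le_sum fun c _ => ptdown c) ?_
      rw [← Finset.sum_mul, chernoff_sum m b (-L), prod_split]
    have hnkpow : 0 ≤ labT ^ NK := by positivity
    have hup_pow : (p1 * exp L + p0') ^ k * exp (-(L * ((k:ℝ) * (pp + t))))
        ≤ ((p1 + p0') * exp (-(2*t^2))) ^ k := by
      have hexpk : exp (-(L * ((k:ℝ) * (pp + t)))) = exp (-(L * (pp + t))) ^ k := by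
        rw [← Real.exp_nat_mul]; congr 1; ring
      rw [hexpk, ← mul_pow]
      apply pow_le_pow_left₀ (by positivity)
      calc (p1 * exp L + p0') * exp (-(L * (pp + t)))
          = exp (-(4*t * (pp + t))) * (p1 * exp (4*t) + p0') := by rw [hLdef]; ring
        _ ≤ (p1 + p0') * exp (-(2*t^2)) := perfac_up hp1 hp0' ht
    have hdown_pow : (p1 * exp (-L) + p0') ^ k * exp (L * ((k:ℝ) * (pp - t)))
        ≤ ((p1 + p0') * exp (-(2*t^2))) ^ k := by
      have hexpk : exp (L * ((k:ℝ) * (pp - t))) = exp (L * (pp - t)) ^ k := by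
        rw [← Real.exp_nat_mul]; congr 1; ring
      rw [hexpk, ← mul_pow]
      apply pow_le_pow_left₀ (by positivity)
      calc (p1 * exp (-L) + p0') * exp (L * (pp - t))
          = exp (4*t * (pp - t)) * (p1 * exp (-(4*t)) + p0') := by rw [hLdef]; ring
        _ ≤ (p1 + p0') * exp (-(2*t^2)) := perfac_down hp1 hp0' ht
    have final : ((p1 + p0') * exp (-(2*t^2))) ^ k * labT ^ NK * 2
        = (∏ i, (if b i = false then p1 + p0' else labT)) * (2 * exp (-c')) := by
      rw [prod_split, hc'eq, mul_pow, ← hkdef, ← hNKdef]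
      ring
    refine le_trans (add_le_add up_le down_le) ?_
    calc ((p1 * exp L + p0') ^ k * labT ^ NK) * exp (-(L * ((k:ℝ) * (pp + t))))
            + ((p1 * exp (-L) + p0') ^ k * labT ^ NK) * exp (L * ((k:ℝ) * (pp - t)))
        = ((p1 * exp L + p0') ^ k * exp (-(L * ((k:ℝ) * (pp + t))))) * labT ^ NK
            + ((p1 * exp (-L) + p0') ^ k * exp (L * ((k:ℝ) * (pp - t)))) * labT ^ NK := by
          ring
      _ ≤ ((p1 + p0') * exp (-(2*t^2))) ^ k * labT ^ NK
            + ((p1 + p0') * exp (-(2*t^2))) ^ k * labT ^ NK :=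
          add_le_add (mul_le_mul_of_nonneg_right hup_pow hnkpow)
            (mul_le_mul_of_nonneg_right hdown_pow hnkpow)
      _ = ((p1 + p0') * exp (-(2*t^2))) ^ k * labT ^ NK * 2 := by ring
      _ = (∏ i, (if b i = false then p1 + p0' else labT)) * (2 * exp (-c')) := final

def pairE (n : ℕ) : ((Fin n → Bool) × (Fin n → Bool)) ≃ (Fin n → Bool × Bool) where
  toFun p := fun i => (p.2 i, p.1 i)
  invFun v := (fun i => (v i).2, fun i => (v i).1)
  left_inv p := rfl
  right_inv v := rfl

lemma real_core (n : ℕ) (m : Bool × Bool → ℝ) (hm : ∀ x, 0 ≤ m x)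
    (hsum : m (true, true) + m (false, true) + m (true, false) + m (false, false) = 1)
    (c' : ℝ) (hc' : 0 ≤ c') :
    ∑ v : Fin n → Bool × Bool,
      (if 0 < kb (fun i => (v i).2) ∧
          Real.sqrt (c' / (2 * kb (fun i => (v i).2))) <
          |m (true, false) / (m (true, false) + m (false, false))
            - (jb (fun i => (v i).2) (fun i => (v i).1) : ℝ) / (kb (fun i => (v i).2))|
        then ∏ i, m (v i) else 0) ≤ 2 * exp (-c') := by
  set F : (Fin n → Bool × Bool) → ℝ := fun v =>
      (if 0 < kb (fun i => (v i).2) ∧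
          Real.sqrt (c' / (2 * kb (fun i => (v i).2))) <
          |m (true, false) / (m (true, false) + m (false, false))
            - (jb (fun i => (v i).2) (fun i => (v i).1) : ℝ) / (kb (fun i => (v i).2))|
        then ∏ i, m (v i) else 0) with hF
  have reidx : ∑ v : Fin n → Bool × Bool, F v
      = ∑ b : Fin n → Bool, ∑ c : Fin n → Bool, F (fun i => (c i, b i)) := by
    rw [← Equiv.sum_comp (pairE n) F, Fintype.sum_prod_type]
    rfl
  rw [reidx]
  have hFeq : ∀ (b c : Fin n → Bool), F (fun i => (c i, b i))
      = (if 0 < kb b ∧ Real.sqrt (c' / (2 * kb b)) <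
          |m (true, false) / (m (true, false) + m (false, false)) - (jb b c : ℝ) / (kb b)|
        then ∏ i, m (c i, b i) else 0) := fun b c => rfl
  calc ∑ b : Fin n → Bool, ∑ c : Fin n → Bool, F (fun i => (c i, b i))
      ≤ ∑ b : Fin n → Bool,
          (∏ i, (if b i = false then m (true, false) + m (false, false)
                else m (true, true) + m (false, true))) * (2 * exp (-c')) := by
        apply Finset.sum_le_sum
        intro b _
        rw [Finset.sum_congr rfl (fun c _ => hFeq b c)]
        exact inner_bound m hm b c' hc'
    _ = (∑ b : Fin n → Bool,
          ∏ i, (if b i = false then m (true, false) + m (false, false)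
                else m (true, true) + m (false, true))) * (2 * exp (-c')) := by
        rw [Finset.sum_mul]
    _ = 1 * (2 * exp (-c')) := by
        congr 1
        rw [← Fintype.prod_sum (fun (i : Fin n) (x : Bool) =>
          if x = false then m (true, false) + m (false, false)
          else m (true, true) + m (false, true))]
        have : ∀ i : Fin n, (∑ x : Bool,
            if x = false then m (true, false) + m (false, false)
            else m (true, true) + m (false, true)) = 1 := by
          intro i
          rw [Fintype.sum_bool, if_neg (by simp), if_pos rfl]
          linarith
        rw [Finset.prod_congr rfl (fun i _ => this i), Finset.prod_const, one_pow]
    _ = 2 * exp (-c') := one_mul _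


-- measure of an arbitrary set in a finite measurable space with measurable singletons
lemma measure_eq_sum_ite {E : Type*} [Fintype E] [MeasurableSpace E]
    [MeasurableSingletonClass E] (μ : Measure E) (s : Set E) [DecidablePred (· ∈ s)] :
    μ s = ∑ x : E, (if x ∈ s then μ {x} else 0) := by
  have hs : s = ⋃ x ∈ univ.filter (· ∈ s), ({x} : Set E) := by
    ext y; simp
  conv_lhs => rw [hs]
  rw [measure_biUnion_finset ?hd fun b _ => measurableSet_singleton b]
  · rw [Finset.sum_filter]
  · intro x hx y hy hxy
    simp only [Set.disjoint_singleton_left, Set.mem_singleton_iff]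
    exact hxy

lemma edistE_ofReal {a b : ℝ} (ha : 0 ≤ a) (hb : 0 ≤ b) :
    edistE (ENNReal.ofReal a) (ENNReal.ofReal b) = ENNReal.ofReal |a - b| := by
  have hmono : Monotone ENNReal.ofReal := fun _ _ h => ENNReal.ofReal_le_ofReal h
  rw [edistE, ← ENNReal.ofReal_sub a hb, ← ENNReal.ofReal_sub b ha, ← Monotone.map_max hmono]
  congr 1
  rw [abs_eq_max_neg]
  congr 1
  ring

lemma edistE_le_one {a b : ℝ≥0∞} (ha : a ≤ 1) (hb : b ≤ 1) : edistE a b ≤ 1 := by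
  rw [edistE, sup_le_iff]
  constructor
  · exact le_trans (tsub_le_self.trans ha) le_rfl
  · exact le_trans (tsub_le_self.trans hb) le_rfl

lemma master (ν : Measure (Bool × Bool)) [IsProbabilityMeasure ν] (n : ℕ) (c δ : ℝ)
    (hc : 0 ≤ c) (hδ0 : 0 < δ) (hδ1 : δ < 1) :
    (Measure.pi fun _ : Fin n => ν)
      {v : Fin n → Bool × Bool |
        ¬ edistE (ν {x | x.1 = true ∧ x.2 = false} / ν {x | x.2 = false})
          (if 0 < kb (fun i => (v i).2) then
             (((univ.filter fun i => (v i).2 = false ∧ (v i).1 = true).card : ℝ≥0∞)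
               / (kb (fun i => (v i).2) : ℝ≥0∞))
           else 0)
          ≤ penNP c δ (kb fun i => (v i).2)}
      ≤ ENNReal.ofReal (δ * (2 : ℝ) ^ (-c)) := by
  classical
  set c' : ℝ := c * Real.log 2 + Real.log (2 / δ) with hc'def
  have hlog2 : 0 < Real.log 2 := Real.log_pos one_lt_two
  have hlogδ : 0 < Real.log (2 / δ) := Real.log_pos (by rw [lt_div_iff₀ hδ0]; linarith)
  have hc' : 0 ≤ c' := by positivity
  have hδeq : δ * (2:ℝ) ^ (-c) = 2 * Real.exp (-c') := by
    have h1 : Real.exp (-c') = Real.exp (-(c * Real.log 2)) * Real.exp (-Real.log (2/δ)) := by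
      rw [← Real.exp_add]; congr 1; rw [hc'def]; ring
    have h2 : Real.exp (-Real.log (2/δ)) = δ / 2 := by
      rw [Real.exp_neg, Real.exp_log (by positivity)]
      rw [inv_div]
    have h3 : Real.exp (-(c * Real.log 2)) = (2:ℝ) ^ (-c) := by
      rw [Real.rpow_def_of_pos (by norm_num : (0:ℝ) < 2)]
      congr 1; ring
    rw [h1, h2, h3]; ring
  set m : Bool × Bool → ℝ := fun x => (ν {x}).toReal with hmdef
  have hm : ∀ x, 0 ≤ m x := fun x => ENNReal.toReal_nonneg
  have hν : ∀ x, ν {x} = ENNReal.ofReal (m x) := fun x =>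
    (ENNReal.ofReal_toReal (measure_ne_top ν {x})).symm
  have hsum : m (true, true) + m (false, true) + m (true, false) + m (false, false) = 1 := by
    have huniv : (Set.univ : Set (Bool × Bool))
        = {(true, true)} ∪ ({(false, true)} ∪ ({(true, false)} ∪ {(false, false)})) := by
      ext ⟨a, b⟩; cases a <;> cases b <;> simp
    have h1 : ν (Set.univ) = ν {(true, true)} + ν {(false, true)}
        + ν {(true, false)} + ν {(false, false)} := by
      rw [huniv, measure_union (by simp) (by
          exact (Set.finite_singleton _).union ((Set.finite_singleton _).union
            (Set.finite_singleton _)) |>.measurableSet),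
        measure_union (by simp) (((Set.finite_singleton _).union
            (Set.finite_singleton _)).measurableSet),
        measure_union (by simp) (Set.finite_singleton _).measurableSet]
      ring
    rw [measure_univ] at h1
    have := congrArg ENNReal.toReal h1
    rw [ENNReal.toReal_add, ENNReal.toReal_add, ENNReal.toReal_add] at this
    · rw [ENNReal.toReal_one] at this
      linarith [this]
    all_goals first
      | exact measure_ne_top _ _
      | exact ENNReal.add_ne_top.mpr ⟨measure_ne_top _ _, measure_ne_top _ _⟩
      | exact ENNReal.add_ne_top.mpr ⟨ENNReal.add_ne_top.mpr
          ⟨measure_ne_top _ _, measure_ne_top _ _⟩, measure_ne_top _ _⟩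
  -- identification of numerator and denominator
  have hA : ν {x : Bool × Bool | x.1 = true ∧ x.2 = false} = ENNReal.ofReal (m (true, false)) := by
    rw [← hν]
    congr 1
    ext ⟨a, b⟩
    simp [Prod.ext_iff]
  have hBset : {x : Bool × Bool | x.2 = false}
      = ({(true, false)} ∪ {(false, false)} : Set (Bool × Bool)) := by
    ext ⟨a, b⟩; cases a <;> cases b <;> simp
  have hB : ν {x : Bool × Bool | x.2 = false}
      = ENNReal.ofReal (m (true, false) + m (false, false)) := by
    rw [hBset, measure_union (by simp) (Set.finite_singleton _).measurableSet, hν, hν,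
      ENNReal.ofReal_add (hm _) (hm _)]
  set pp : ℝ := m (true, false) / (m (true, false) + m (false, false)) with hppdef
  have hratio : ν {x : Bool × Bool | x.1 = true ∧ x.2 = false} / ν {x : Bool × Bool | x.2 = false}
      = ENNReal.ofReal pp := by
    rw [hA, hB]
    rcases eq_or_lt_of_le (add_nonneg (hm (true, false)) (hm (false, false))) with h0 | h0
    · have h1 : m (true, false) = 0 := by
        have := hm (true, false); have := hm (false, false); linarith
      have h2 : m (false, false) = 0 := by
        have := hm (true, false); have := hm (false, false); linarith
      rw [hppdef, h1, h2]
      simp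
    · rw [← ENNReal.ofReal_div_of_pos h0]
  have hpp0 : 0 ≤ pp := div_nonneg (hm _) (add_nonneg (hm _) (hm _))
  have hpp1 : pp ≤ 1 := by
    rcases eq_or_lt_of_le (add_nonneg (hm (true, false)) (hm (false, false))) with h0 | h0
    · rw [hppdef, ← h0]; simp
    · rw [hppdef, div_le_one h0]; linarith [hm (false, false)]
  -- the "bad" set with real-valued conditions
  set S' : Set (Fin n → Bool × Bool) := {v |
      0 < kb (fun i => (v i).2) ∧
      Real.sqrt (c' / (2 * kb (fun i => (v i).2))) <
        |pp - (jb (fun i => (v i).2) (fun i => (v i).1) : ℝ) / (kb (fun i => (v i).2))|} with hS'def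
  have hsubset : {v : Fin n → Bool × Bool |
        ¬ edistE (ν {x | x.1 = true ∧ x.2 = false} / ν {x | x.2 = false})
          (if 0 < kb (fun i => (v i).2) then
             (((univ.filter fun i => (v i).2 = false ∧ (v i).1 = true).card : ℝ≥0∞)
               / (kb (fun i => (v i).2) : ℝ≥0∞))
           else 0)
          ≤ penNP c δ (kb fun i => (v i).2)} ⊆ S' := by
    intro v hv
    simp only [Set.mem_setOf_eq] at hv
    rcases Nat.eq_zero_or_pos (kb (fun i => (v i).2)) with hk0 | hk
    · exfalso
      apply hv
      rw [hk0]
      simp only [lt_irrefl, if_false]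
      rw [penNP, if_neg (by simp)]
      apply edistE_le_one
      · rw [hratio]
        exact ENNReal.ofReal_le_one.mpr hpp1
      · exact zero_le_one
    · have hkR : (0:ℝ) < (kb (fun i => (v i).2) : ℝ) := by exact_mod_cast hk
      set j : ℕ := jb (fun i => (v i).2) (fun i => (v i).1) with hjdef
      have hjcard : (univ.filter fun i => (v i).2 = false ∧ (v i).1 = true).card = j := rfl
      have hemp : (if 0 < kb (fun i => (v i).2) then
             (((univ.filter fun i => (v i).2 = false ∧ (v i).1 = true).card : ℝ≥0∞)
               / (kb (fun i => (v i).2) : ℝ≥0∞))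
           else 0) = ENNReal.ofReal ((j : ℝ) / (kb (fun i => (v i).2) : ℝ)) := by
        rw [if_pos hk, hjcard, ENNReal.ofReal_div_of_pos hkR, ENNReal.ofReal_natCast,
          ENNReal.ofReal_natCast]
      have hpen : penNP c δ (kb (fun i => (v i).2))
          = ENNReal.ofReal (Real.sqrt (c' / (2 * kb (fun i => (v i).2)))) := by
        rw [penNP, if_pos hk, hc'def]
      rw [hemp, hpen, hratio,
        edistE_ofReal hpp0 (div_nonneg (Nat.cast_nonneg _) (le_of_lt hkR))] at hv
      have := lt_of_not_ge hv
      rw [ENNReal.ofReal_lt_ofReal_iff_of_nonneg (Real.sqrt_nonneg _)] at this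
      exact ⟨hk, this⟩
  refine le_trans (measure_mono hsubset) ?_
  -- compute the measure of S' as a finite sum
  have hS'meas := measure_eq_sum_ite (Measure.pi fun _ : Fin n => ν) S'
  rw [hS'meas]
  have hsing : ∀ v : Fin n → Bool × Bool,
      (Measure.pi fun _ : Fin n => ν) {v} = ENNReal.ofReal (∏ i, m (v i)) := by
    intro v
    rw [← Set.univ_pi_singleton v, Measure.pi_pi]
    rw [Finset.prod_congr rfl (fun i _ => hν (v i)),
      ← ENNReal.ofReal_prod_of_nonneg (fun i _ => hm (v i))]
  calc ∑ v : Fin n → Bool × Bool, (if v ∈ S' then (Measure.pi fun _ : Fin n => ν) {v} else 0)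
      = ∑ v : Fin n → Bool × Bool, ENNReal.ofReal
          (if v ∈ S' then (∏ i, m (v i)) else 0) := by
        apply Finset.sum_congr rfl
        intro v _
        by_cases h : v ∈ S'
        · simp only [if_pos h, hsing v]
        · simp only [if_neg h, ENNReal.ofReal_zero]
    _ = ENNReal.ofReal (∑ v : Fin n → Bool × Bool,
          (if v ∈ S' then (∏ i, m (v i)) else 0)) := by
        rw [ENNReal.ofReal_sum_of_nonneg]
        intro v _
        split
        · exact Finset.prod_nonneg fun i _ => hm _
        · exact le_rfl
    _ ≤ ENNReal.ofReal (2 * Real.exp (-c')) := by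
        apply ENNReal.ofReal_le_ofReal
        refine le_trans (le_of_eq ?_) (real_core n m hm hsum c' hc')
        apply Finset.sum_congr rfl
        intro v _
        by_cases h : v ∈ S'
        · rw [if_pos h, if_pos (by exact h)]
        · rw [if_neg h, if_neg (by exact h)]
    _ = ENNReal.ofReal (δ * (2:ℝ) ^ (-c)) := by rw [hδeq]

lemma per_h {𝓧 : Type*} [MeasurableSpace 𝓧] (P : Measure (𝓧 × Bool)) [IsProbabilityMeasure P]
    (g : 𝓧 × Bool → Bool) (hg : Measurable g) (y : Bool) (n : ℕ) (c δ : ℝ)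
    (hc : 0 ≤ c) (hδ0 : 0 < δ) (hδ1 : δ < 1) :
    (Measure.pi fun _ : Fin n => P)
      {ω : Fin n → 𝓧 × Bool |
        ¬ edistE (P {z | g z = true ∧ z.2 = y} / P {z | z.2 = y})
          (if 0 < (univ.filter fun i => (ω i).2 = y).card then
             (((univ.filter fun i => (ω i).2 = y ∧ g (ω i) = true).card : ℝ≥0∞)
               / ((univ.filter fun i => (ω i).2 = y).card : ℝ≥0∞))
           else 0)
          ≤ penNP c δ (univ.filter fun i => (ω i).2 = y).card}
      ≤ ENNReal.ofReal (δ * (2 : ℝ) ^ (-c)) := by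
  classical
  set φ : 𝓧 × Bool → Bool × Bool := fun z => (g z, !(decide (z.2 = y))) with hφdef
  have hφ : Measurable φ := by
    apply Measurable.prodMk hg
    exact (Measurable.of_discrete (f := fun b : Bool => !(decide (b = y)))).comp measurable_snd
  have hprob : IsProbabilityMeasure (P.map φ) := Measure.isProbabilityMeasure_map hφ.aemeasurable
  have hMP : MeasurePreserving (fun (ω : Fin n → 𝓧 × Bool) i => φ (ω i))
      (Measure.pi fun _ : Fin n => P) (Measure.pi fun _ : Fin n => P.map φ) :=
    measurePreserving_pi _ _ (fun _ => ⟨hφ, rfl⟩)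
  -- identities between φ-counts and raw counts
  have hkb : ∀ ω : Fin n → 𝓧 × Bool,
      kb (fun i => (φ (ω i)).2) = (univ.filter fun i => (ω i).2 = y).card := by
    intro ω
    unfold kb
    congr 1
    apply Finset.filter_congr
    intro i _
    simp [hφdef]
  have hjb : ∀ ω : Fin n → 𝓧 × Bool,
      (univ.filter fun i => (φ (ω i)).2 = false ∧ (φ (ω i)).1 = true).card
        = (univ.filter fun i => (ω i).2 = y ∧ g (ω i) = true).card := by
    intro ω
    congr 1
    apply Finset.filter_congr
    intro i _
    simp [hφdef]
  have hν1 : (P.map φ) {x : Bool × Bool | x.1 = true ∧ x.2 = false}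
      = P {z | g z = true ∧ z.2 = y} := by
    rw [Measure.map_apply hφ (Set.to_countable _).measurableSet]
    congr 1
    ext z
    simp [hφdef]
  have hν2 : (P.map φ) {x : Bool × Bool | x.2 = false} = P {z | z.2 = y} := by
    rw [Measure.map_apply hφ (Set.to_countable _).measurableSet]
    congr 1
    ext z
    simp [hφdef]
  have hsets : {ω : Fin n → 𝓧 × Bool |
        ¬ edistE (P {z | g z = true ∧ z.2 = y} / P {z | z.2 = y})
          (if 0 < (univ.filter fun i => (ω i).2 = y).card then
             (((univ.filter fun i => (ω i).2 = y ∧ g (ω i) = true).card : ℝ≥0∞)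
               / ((univ.filter fun i => (ω i).2 = y).card : ℝ≥0∞))
           else 0)
          ≤ penNP c δ (univ.filter fun i => (ω i).2 = y).card}
      = (fun (ω : Fin n → 𝓧 × Bool) i => φ (ω i)) ⁻¹'
        {v : Fin n → Bool × Bool |
          ¬ edistE ((P.map φ) {x | x.1 = true ∧ x.2 = false} / (P.map φ) {x | x.2 = false})
            (if 0 < kb (fun i => (v i).2) then
               (((univ.filter fun i => (v i).2 = false ∧ (v i).1 = true).card : ℝ≥0∞)
                 / (kb (fun i => (v i).2) : ℝ≥0∞))
             else 0)
            ≤ penNP c δ (kb fun i => (v i).2)} := by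
    ext ω
    simp only [Set.mem_setOf_eq, Set.mem_preimage]
    rw [hkb ω, hjb ω, hν1, hν2]
  rw [hsets, hMP.measure_preimage (Set.to_countable _).measurableSet.nullMeasurableSet]
  exact master (P.map φ) n c δ hc hδ0 hδ1

lemma union_wrap {Ω : Type*} [MeasurableSpace Ω] (μ : Measure Ω) [IsProbabilityMeasure μ]
    {𝓗 : Type*} (H : Set 𝓗) (hHcount : H.Countable) (cl : 𝓗 → ℝ)
    (hKraft : ∑' h : H, (2 : ℝ≥0∞) ^ (-(cl h.1)) ≤ 1)
    (δ : ℝ) (hδ0 : 0 < δ) (hδ1 : δ < 1)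
    (Good : 𝓗 → Ω → Prop)
    (hbound : ∀ h ∈ H, μ {ω | ¬ Good h ω} ≤ ENNReal.ofReal (δ * (2:ℝ) ^ (-(cl h)))) :
    ENNReal.ofReal (1 - δ) ≤ μ {ω | ∀ h ∈ H, Good h ω} := by
  have hofReal : ∀ h : 𝓗, ENNReal.ofReal (δ * (2:ℝ) ^ (-(cl h)))
      = ENNReal.ofReal δ * (2 : ℝ≥0∞) ^ (-(cl h)) := by
    intro h
    rw [ENNReal.ofReal_mul (le_of_lt hδ0), ← ENNReal.ofReal_rpow_of_pos (by norm_num : (0:ℝ) < 2)]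
    norm_num
  have hbad : μ (⋃ h ∈ H, {ω | ¬ Good h ω}) ≤ ENNReal.ofReal δ := by
    refine le_trans (measure_biUnion_le μ hHcount _) ?_
    calc ∑' h : H, μ {ω | ¬ Good h.1 ω}
        ≤ ∑' h : H, ENNReal.ofReal δ * (2 : ℝ≥0∞) ^ (-(cl h.1)) := by
          apply ENNReal.tsum_le_tsum
          intro h
          rw [← hofReal h.1]
          exact hbound h.1 h.2
      _ = ENNReal.ofReal δ * ∑' h : H, (2 : ℝ≥0∞) ^ (-(cl h.1)) := ENNReal.tsum_mul_left
      _ ≤ ENNReal.ofReal δ * 1 := mul_le_mul_right hKraft _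
      _ = ENNReal.ofReal δ := mul_one _
  have hgood : {ω | ∀ h ∈ H, Good h ω} = (⋃ h ∈ H, {ω | ¬ Good h ω})ᶜ := by
    ext ω
    simp
  have h1 : (1 : ℝ≥0∞) ≤ μ {ω | ∀ h ∈ H, Good h ω} + ENNReal.ofReal δ := by
    calc (1 : ℝ≥0∞) = μ Set.univ := (measure_univ).symm
      _ ≤ μ ({ω | ∀ h ∈ H, Good h ω} ∪ (⋃ h ∈ H, {ω | ¬ Good h ω})) := by
          apply measure_mono
          intro ω _
          by_cases hω : ∀ h ∈ H, Good h ω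
          · exact Or.inl hω
          · push_neg at hω
            obtain ⟨h, hH, hne⟩ := hω
            exact Or.inr (Set.mem_biUnion hH hne)
      _ ≤ μ {ω | ∀ h ∈ H, Good h ω} + μ (⋃ h ∈ H, {ω | ¬ Good h ω}) := measure_union_le _ _
      _ ≤ μ {ω | ∀ h ∈ H, Good h ω} + ENNReal.ofReal δ := add_le_add_right hbad _
  have h2 : ENNReal.ofReal (1 - δ) + ENNReal.ofReal δ = 1 := by
    rw [← ENNReal.ofReal_add (by linarith) (le_of_lt hδ0)]
    norm_num
  have h3 : ENNReal.ofReal (1 - δ) + ENNReal.ofReal δ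
      ≤ μ {ω | ∀ h ∈ H, Good h ω} + ENNReal.ofReal δ := by
    rw [h2]; exact h1
  exact (ENNReal.add_le_add_iff_right ENNReal.ofReal_ne_top).mp h3

end NPAux

/-- **Uniform deviation bounds for false positive and false negative rates.** For a
countable class `H` with codelengths satisfying the Kraft inequality, with probability at
least `1 - δ` over the i.i.d. training sample every `h ∈ H` satisfies
`|R_FP(h) - R̂_FP(h)| ≤ φ_FP(h, δ)`; likewise, with probability at least `1 - δ`, every
`h ∈ H` satisfies `|R_FN(h) - R̂_FN(h)| ≤ φ_FN(h, δ)`.  This holds for every `n ≥ 1`,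
every `0 < δ < 1` and every distribution `P`. -/
theorem np_uniform_deviation_bounds
    {𝓧 : Type*} [MeasurableSpace 𝓧] (P : Measure (𝓧 × Bool)) [IsProbabilityMeasure P]
    (H : Set (𝓧 → Bool)) (hHcount : H.Countable) (hHmeas : ∀ h ∈ H, Measurable h)
    (cl : (𝓧 → Bool) → ℝ)
    (hKraft : ∑' h : H, (2 : ℝ≥0∞) ^ (-(cl h.1)) ≤ 1)
    (n : ℕ) (hn : 1 ≤ n) (δ : ℝ) (hδ0 : 0 < δ) (hδ1 : δ < 1) :
    ENNReal.ofReal (1 - δ) ≤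
      (Measure.pi fun _ : Fin n => P)
        {ω | ∀ h ∈ H, edistE (RFP P h) (RhatFP h ω) ≤ penNP (cl h) δ (nneg ω)} ∧
    ENNReal.ofReal (1 - δ) ≤
      (Measure.pi fun _ : Fin n => P)
        {ω | ∀ h ∈ H, edistE (RFN P h) (RhatFN h ω) ≤ penNP (cl h) δ (npos ω)} := by
  constructor
  · apply union_wrap (Measure.pi fun _ : Fin n => P) H hHcount cl hKraft δ hδ0 hδ1
    intro h hH
    have hterm : (2 : ℝ≥0∞) ^ (-(cl h)) ≤ 1 :=
      le_trans (ENNReal.le_tsum (⟨h, hH⟩ : H)) hKraft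
    have hcl : 0 ≤ cl h := by
      by_contra hneg
      push_neg at hneg
      have := ENNReal.one_lt_rpow (x := 2) (z := -(cl h)) (by norm_num) (by linarith)
      exact absurd hterm (not_le.mpr this)
    exact per_h P (fun z => h z.1) ((hHmeas h hH).comp measurable_fst) false n (cl h) δ
      hcl hδ0 hδ1
  · apply union_wrap (Measure.pi fun _ : Fin n => P) H hHcount cl hKraft δ hδ0 hδ1
    intro h hH
    have hterm : (2 : ℝ≥0∞) ^ (-(cl h)) ≤ 1 :=
      le_trans (ENNReal.le_tsum (⟨h, hH⟩ : H)) hKraft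
    have hcl : 0 ≤ cl h := by
      by_contra hneg
      push_neg at hneg
      have := ENNReal.one_lt_rpow (x := 2) (z := -(cl h)) (by norm_num) (by linarith)
      exact absurd hterm (not_le.mpr this)
    have hper := per_h P (fun z => !(h z.1))
      ((Measurable.of_discrete (f := fun b : Bool => !b)).comp
        ((hHmeas h hH).comp measurable_fst)) true n (cl h) δ hcl hδ0 hδ1
    have hRFN : RFN P h = P {z : 𝓧 × Bool | (!(h z.1)) = true ∧ z.2 = true}
        / P {z : 𝓧 × Bool | z.2 = true} := by
      rw [RFN]
      congr 2
      ext z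
      simp
    have hRhat : ∀ ω : Fin n → 𝓧 × Bool, RhatFN h ω =
        if 0 < npos ω then
          (((Finset.univ.filter fun i => (ω i).2 = true ∧ (!(h (ω i).1)) = true).card : ℝ≥0∞)
            / (npos ω : ℝ≥0∞))
        else 0 := by
      intro ω
      rw [RhatFN]
      have hfe : (Finset.univ.filter fun i => (ω i).2 = true ∧ h (ω i).1 = false)
          = (Finset.univ.filter fun i => (ω i).2 = true ∧ (!(h (ω i).1)) = true) :=
        Finset.filter_congr (fun i _ => by simp)
      rw [hfe]
    have hseteq : {ω : Fin n → 𝓧 × Bool |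
          ¬ edistE (RFN P h) (RhatFN h ω) ≤ penNP (cl h) δ (npos ω)}
        = {ω : Fin n → 𝓧 × Bool |
          ¬ edistE (P {z | (!(h z.1)) = true ∧ z.2 = true} / P {z | z.2 = true})
            (if 0 < (Finset.univ.filter fun i => (ω i).2 = true).card then
               (((Finset.univ.filter fun i =>
                    (ω i).2 = true ∧ (!(h (ω i).1)) = true).card : ℝ≥0∞)
                 / ((Finset.univ.filter fun i => (ω i).2 = true).card : ℝ≥0∞))
             else 0)
            ≤ penNP (cl h) δ (Finset.univ.filter fun i => (ω i).2 = true).card} := by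
      ext ω
      simp only [Set.mem_setOf_eq]
      rw [hRFN, hRhat ω]
      rfl
    rw [hseteq]
    exact hper
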